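/- arXiv:math/0509559 — 5 statements merged into one kernel-verified Lean document; each statement's English description precedes it below -/
import Mathlib

section
/- The measure μ on [0,1] with density dμ/dλ(x) = 1/x with respect to Lebesgue measure λ is invariant under the Farey map T. -/
open MeasureTheory ENNReal

/-- The Farey map. -/
noncomputable def fareyMap (x : ℝ) : ℝ := if x ≤ 1 / 2 then x / (1 - x) else 1 / x - 1

/-- The infinite invariant measure `dμ = (1/x) dλ` on `[0,1]`. -/
noncomputable def fareyMeasure : Measure ℝ :=
  (volume.restrict (Set.Icc (0 : ℝ) 1)).withDensity fun x => ENNReal.ofReal (1 / x)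

lemma lintegral_image_1d {s : Set ℝ} {f f' : ℝ → ℝ} (hs : MeasurableSet s)
    (hf' : ∀ x ∈ s, HasDerivWithinAt f (f' x) s x) (hf : Set.InjOn f s) (g : ℝ → ℝ≥0∞) :
    ∫⁻ x in f '' s, g x = ∫⁻ x in s, ENNReal.ofReal |f' x| * g (f x) := by
  simpa only [ContinuousLinearMap.det_toSpanSingleton] using
    lintegral_image_eq_lintegral_abs_det_fderiv_mul volume hs
      (fun x hx => (hf' x hx).hasFDerivWithinAt) hf g

lemma fareyMeasure_apply {A : Set ℝ} (hA : MeasurableSet A) :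
    fareyMeasure A = ∫⁻ x in A ∩ Set.Ioc 0 1, ENNReal.ofReal (1 / x) := by
  rw [fareyMeasure, withDensity_apply _ hA, Measure.restrict_restrict hA]
  congr 1
  refine Measure.restrict_congr_set ?_
  exact Filter.EventuallyEq.inter (Filter.EventuallyEq.refl _ _) Ioc_ae_eq_Icc.symm

lemma img0 : (fun y : ℝ => y / (1 + y)) '' Set.Ioc 0 1 = Set.Ioc 0 (1 / 2) := by
  ext x
  constructor
  · rintro ⟨y, ⟨hy0, hy1⟩, rfl⟩
    have h1 : (0:ℝ) < 1 + y := by linarith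
    refine ⟨div_pos hy0 h1, ?_⟩
    rw [div_le_iff₀ h1]
    linarith
  · rintro ⟨hx0, hx2⟩
    have h1 : (0:ℝ) < 1 - x := by linarith
    refine ⟨x / (1 - x), ⟨div_pos hx0 h1, ?_⟩, ?_⟩
    · rw [div_le_one h1]; linarith
    · field_simp; ring

lemma img1 : (fun y : ℝ => (1 + y)⁻¹) '' Set.Ico 0 1 = Set.Ioc (1 / 2) 1 := by
  ext x
  constructor
  · rintro ⟨y, ⟨hy0, hy1⟩, rfl⟩
    have h1 : (0:ℝ) < 1 + y := by linarith
    have h2 : (1 + y) * (1 + y)⁻¹ = 1 := mul_inv_cancel₀ h1.ne'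
    have h3 : (0:ℝ) < (1 + y)⁻¹ := inv_pos.mpr h1
    constructor <;> nlinarith
  · rintro ⟨hx1, hx2⟩
    have hx0 : (0:ℝ) < x := by linarith
    refine ⟨1 / x - 1, ⟨?_, ?_⟩, ?_⟩
    · rw [le_sub_iff_add_le, zero_add, le_div_iff₀ hx0]; linarith
    · rw [sub_lt_iff_lt_add, div_lt_iff₀ hx0]; linarith
    · show (1 + (1 / x - 1))⁻¹ = x
      have h : 1 + (1 / x - 1) = 1 / x := by ring
      rw [h, one_div, inv_inv]

set_option maxHeartbeats 1000000 in
/-- The measure with density `1/x` with respect to Lebesgue measure on `[0,1]` is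
invariant under the Farey map. -/
theorem fareyMap_measurePreserving :
    MeasurePreserving fareyMap fareyMeasure fareyMeasure := by
  have hmT : Measurable fareyMap := by
    unfold fareyMap
    refine Measurable.ite (measurableSet_le measurable_id measurable_const) ?_ ?_
    · exact measurable_id.div (measurable_const.sub measurable_id)
    · exact (measurable_const.div measurable_id).sub measurable_const
  refine ⟨hmT, ?_⟩
  ext s hs
  rw [Measure.map_apply hmT hs, fareyMeasure_apply (hmT hs), fareyMeasure_apply hs]
  -- decompose the preimage side
  set g : ℝ → ℝ≥0∞ := (fareyMap ⁻¹' s).indicator (fun x => ENNReal.ofReal (1 / x)) with hg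
  have hsplit : Set.Ioc (0:ℝ) 1 = Set.Ioc 0 (1/2) ∪ Set.Ioc (1/2) 1 := by
    rw [Set.Ioc_union_Ioc_eq_Ioc] <;> norm_num
  have key : ∀ (J : Set ℝ), MeasurableSet J →
      ∫⁻ x in fareyMap ⁻¹' s ∩ J, ENNReal.ofReal (1 / x) = ∫⁻ x in J, g x := by
    intro J hJ
    rw [hg, lintegral_indicator (hmT hs), Measure.restrict_restrict (hmT hs)]
  rw [key _ (measurableSet_Ioc), hsplit, lintegral_union measurableSet_Ioc
    (Set.Ioc_disjoint_Ioc_of_le le_rfl)]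
  -- first branch : change of variables y ↦ y/(1+y)
  have hd0 : ∀ y ∈ Set.Ioc (0:ℝ) 1,
      HasDerivWithinAt (fun y : ℝ => y / (1 + y)) (1 / (1 + y)^2) (Set.Ioc 0 1) y := by
    intro y hy
    have h1 : (0:ℝ) < 1 + y := by linarith [hy.1]
    have hc : HasDerivAt (fun z : ℝ => 1 + z) 1 y := by
      simpa using (hasDerivAt_id y).const_add (1:ℝ)
    have h2 : HasDerivWithinAt (fun z : ℝ => z / (1 + z))
        ((1 * (1 + y) - y * 1) / (1 + y) ^ 2) (Set.Ioc 0 1) y :=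
      ((hasDerivAt_id y).div hc h1.ne').hasDerivWithinAt
    rw [show (1:ℝ) / (1 + y)^2 = (1 * (1 + y) - y * 1) / (1 + y) ^ 2 by ring]
    exact h2
  have hinj0 : Set.InjOn (fun y : ℝ => y / (1 + y)) (Set.Ioc 0 1) := by
    intro y hy z hz h
    have h1 : (1:ℝ) + y ≠ 0 := by linarith [hy.1]
    have h2 : (1:ℝ) + z ≠ 0 := by linarith [hz.1]
    field_simp at h
    nlinarith
  have branch0 : ∫⁻ x in Set.Ioc (0:ℝ) (1/2), g x
      = ∫⁻ y in Set.Ioc (0:ℝ) 1, s.indicator (fun z => ENNReal.ofReal (1 / (z * (1 + z)))) y := by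
    rw [← img0, lintegral_image_1d measurableSet_Ioc hd0 hinj0 g]
    refine setLIntegral_congr_fun measurableSet_Ioc ?_
    intro y hy; beta_reduce
    have hy0 := hy.1
    have hy1 := hy.2
    have h1 : (0:ℝ) < 1 + y := by linarith
    have habs : |1 / (1 + y)^2| = 1 / (1 + y)^2 := abs_of_pos (by positivity)
    have hle : y / (1 + y) ≤ 1 / 2 := by rw [div_le_iff₀ h1]; linarith
    have hT : fareyMap (y / (1 + y)) = y := by
      rw [fareyMap, if_pos hle]
      have h2 : 1 - y / (1 + y) = 1 / (1 + y) := by field_simp; ring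
      rw [h2]
      field_simp
    by_cases hys : y ∈ s
    · have hmem : y / (1 + y) ∈ fareyMap ⁻¹' s := by simp [Set.mem_preimage, hT, hys]
      rw [hg, Set.indicator_of_mem hmem, Set.indicator_of_mem hys, habs,
        ← ENNReal.ofReal_mul (by positivity)]
      congr 1
      field_simp
    · have hmem : y / (1 + y) ∉ fareyMap ⁻¹' s := by simp [Set.mem_preimage, hT, hys]
      rw [hg, Set.indicator_of_notMem hmem, Set.indicator_of_notMem hys, mul_zero]
  -- second branch : change of variables y ↦ (1+y)⁻¹
  have hd1 : ∀ y ∈ Set.Ico (0:ℝ) 1,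
      HasDerivWithinAt (fun y : ℝ => (1 + y)⁻¹) (-1 / (1 + y)^2) (Set.Ico 0 1) y := by
    intro y hy
    have h1 : (0:ℝ) < 1 + y := by linarith [hy.1]
    have hc : HasDerivAt (fun z : ℝ => 1 + z) 1 y := by
      simpa using (hasDerivAt_id y).const_add (1:ℝ)
    have := hc.inv h1.ne'
    exact this.hasDerivWithinAt
  have hinj1 : Set.InjOn (fun y : ℝ => (1 + y)⁻¹) (Set.Ico 0 1) := by
    intro y _ z _ h
    have := inv_injective h
    linarith
  have branch1 : ∫⁻ x in Set.Ioc (1/2 : ℝ) 1, g x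
      = ∫⁻ y in Set.Ioc (0:ℝ) 1, s.indicator (fun z => ENNReal.ofReal (1 / (1 + z))) y := by
    rw [← img1, lintegral_image_1d measurableSet_Ico hd1 hinj1 g,
      ← restrict_Ico_eq_restrict_Ioc]
    refine setLIntegral_congr_fun measurableSet_Ico ?_
    intro y hy; beta_reduce
    have hy0 := hy.1
    have hy1 := hy.2
    have h1 : (0:ℝ) < 1 + y := by linarith
    have habs : |(-1 : ℝ) / (1 + y)^2| = 1 / (1 + y)^2 := by
      rw [abs_div]
      simp [abs_of_pos (show (0:ℝ) < (1+y)^2 by positivity)]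
    have h2 : (1 + y) * (1 + y)⁻¹ = 1 := mul_inv_cancel₀ h1.ne'
    have h3 : (0:ℝ) < (1 + y)⁻¹ := inv_pos.mpr h1
    have hgt : ¬ ((1 + y)⁻¹ ≤ 1 / 2) := by
      rw [not_le]
      nlinarith
    have hT : fareyMap ((1 + y)⁻¹) = y := by
      rw [fareyMap, if_neg hgt, one_div, inv_inv]
      ring
    by_cases hys : y ∈ s
    · have hmem : (1 + y)⁻¹ ∈ fareyMap ⁻¹' s := by simp [Set.mem_preimage, hT, hys]
      rw [hg, Set.indicator_of_mem hmem, Set.indicator_of_mem hys, habs,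
        ← ENNReal.ofReal_mul (by positivity)]
      congr 1
      field_simp
    · have hmem : (1 + y)⁻¹ ∉ fareyMap ⁻¹' s := by simp [Set.mem_preimage, hT, hys]
      rw [hg, Set.indicator_of_notMem hmem, Set.indicator_of_notMem hys, mul_zero]
  have hm1 : Measurable (s.indicator (fun z : ℝ => ENNReal.ofReal (1 / (z * (1 + z))))) := by
    exact (Measurable.ennreal_ofReal (measurable_const.div
      (measurable_id.mul (measurable_const.add measurable_id)))).indicator hs
  have hRHS : ∫⁻ x in s ∩ Set.Ioc (0:ℝ) 1, ENNReal.ofReal (1 / x)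
      = ∫⁻ y in Set.Ioc (0:ℝ) 1, s.indicator (fun z => ENNReal.ofReal (1 / z)) y := by
    rw [lintegral_indicator hs, Measure.restrict_restrict hs]
  rw [branch0, branch1, ← lintegral_add_left hm1, ← hsplit, hRHS]
  refine setLIntegral_congr_fun measurableSet_Ioc ?_
  intro y hy; beta_reduce
  have hy0 := hy.1
  have h1 : (0:ℝ) < 1 + y := by linarith
  by_cases hys : y ∈ s
  · rw [Set.indicator_of_mem hys, Set.indicator_of_mem hys, Set.indicator_of_mem hys,
      ← ENNReal.ofReal_add (by positivity) (by positivity)]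
    congr 1
    field_simp
  · rw [Set.indicator_of_notMem hys, Set.indicator_of_notMem hys,
      Set.indicator_of_notMem hys, add_zero]
end

section
/- The map on irrationals in (0,1) induced by the Farey map on the set A_1 = (1/2,1] via the first entry time coincides with the Gauss map: for irrational x, S(x) := T^{e(x)+1}(x) = 1/x - ⌊1/x⌋ = G(x), where e(x) = min{k ≥ 0 : T^k(x) ∈ (1/2,1]}. -/
/-- The Gauss map `G(x) = 1/x - ⌊1/x⌋` (with `G 0 = 0`). -/
noncomputable def gaussMap (x : ℝ) : ℝ := if x = 0 then 0 else Int.fract (1 / x)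

/-- The first entry time into `A₁ = (1/2, 1]` under the Farey map. -/
noncomputable def entryTime (x : ℝ) : ℕ :=
  sInf {k : ℕ | fareyMap^[k] x ∈ Set.Ioc (1 / 2 : ℝ) 1}

/-- The map induced by the Farey map on `A₁ = (1/2,1]` via the first entry time
coincides with the Gauss map on the irrationals of `(0,1)`:
`T^{e(x)+1}(x) = 1/x - ⌊1/x⌋ = G(x)`. -/
theorem induced_fareyMap_eq_gaussMap (x : ℝ) (hx : Irrational x)
    (hx01 : x ∈ Set.Ioo (0 : ℝ) 1) :
    fareyMap^[entryTime x + 1] x = 1 / x - ⌊1 / x⌋ ∧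
      fareyMap^[entryTime x + 1] x = gaussMap x := by
  obtain ⟨hx0, hx1⟩ := hx01
  have hxne : x ≠ 0 := ne_of_gt hx0
  have h1x : 1 < 1 / x := by rw [lt_div_iff₀ hx0]; linarith
  set f : ℤ := ⌊(1 / x : ℝ)⌋ with hf
  have hinv : Irrational (1 / x) := by
    rw [one_div]; exact hx.inv
  have hflt : (f : ℝ) < 1 / x := lt_of_le_of_ne (Int.floor_le _) (Ne.symm (hinv.ne_int f))
  have hlt2 : 1 / x < (f : ℝ) + 1 := Int.lt_floor_add_one _
  have hf1 : 1 ≤ f := by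
    have : ((1 : ℤ) : ℝ) ≤ 1 / x := by push_cast; linarith
    exact Int.le_floor.mpr this
  set m : ℕ := (f - 1).toNat with hmdef
  have hm : (m : ℝ) = (f : ℝ) - 1 := by
    have : ((f - 1).toNat : ℤ) = f - 1 := Int.toNat_of_nonneg (by omega)
    push_cast [hmdef]
    exact_mod_cast this
  have hmlt : (m : ℝ) + 1 < 1 / x := by rw [hm]; linarith
  have hmgt : 1 / x < (m : ℝ) + 2 := by rw [hm]; linarith
  -- key iteration formula
  have key : ∀ k : ℕ, k ≤ m → fareyMap^[k] x = x / (1 - k * x) := by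
    intro k
    induction k with
    | zero => intro _; simp
    | succ k ih =>
      intro hk
      have hk' : k ≤ m := Nat.le_of_succ_le hk
      have hkR : (k : ℝ) + 2 ≤ (m : ℝ) + 1 := by
        have : (k : ℝ) + 1 ≤ m := by exact_mod_cast hk
        linarith
      have hk2 : ((k : ℝ) + 2) * x < 1 := by
        have h1 : ((k : ℝ) + 2) * x < (1 / x) * x := by
          apply mul_lt_mul_of_pos_right _ hx0
          linarith
        rw [one_div, inv_mul_cancel₀ hxne] at h1
        exact h1
      have hden : 0 < 1 - (k : ℝ) * x := by nlinarith
      have hden' : 0 < 1 - ((k : ℝ) + 1) * x := by nlinarith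
      have hle : x / (1 - (k : ℝ) * x) ≤ 1 / 2 := by
        rw [div_le_div_iff₀ hden (by norm_num)]
        nlinarith
      rw [Function.iterate_succ_apply', ih hk', fareyMap, if_pos hle]
      have h1 : 1 - (k : ℝ) * x ≠ 0 := ne_of_gt hden
      have h2 : 1 - ((k : ℝ) + 1) * x ≠ 0 := ne_of_gt hden'
      push_cast
      have h3 : 0 < 1 - x / (1 - (k : ℝ) * x) := by linarith
      rw [div_eq_div_iff h3.ne' hden'.ne']
      field_simp
      rw [eq_comm, sub_eq_iff_eq_add, ← add_div, eq_div_iff (by rw [mul_comm]; exact h1)]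
      ring
  have hmx1 : ((m : ℝ) + 1) * x < 1 := by
    have h1 : ((m : ℝ) + 1) * x < (1 / x) * x := mul_lt_mul_of_pos_right hmlt hx0
    rwa [one_div, inv_mul_cancel₀ hxne] at h1
  have hmx2 : 1 < ((m : ℝ) + 2) * x := by
    have h1 : (1 / x) * x < ((m : ℝ) + 2) * x := mul_lt_mul_of_pos_right hmgt hx0
    rwa [one_div, inv_mul_cancel₀ hxne] at h1
  have hmx : 0 < 1 - (m : ℝ) * x := by nlinarith
  have hmem : fareyMap^[m] x ∈ Set.Ioc (1 / 2 : ℝ) 1 := by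
    rw [key m le_rfl]
    constructor
    · rw [div_lt_div_iff₀ (by norm_num) hmx]
      nlinarith
    · rw [div_le_one hmx]
      nlinarith
  have hnot : ∀ k, k < m → fareyMap^[k] x ∉ Set.Ioc (1 / 2 : ℝ) 1 := by
    intro k hk hmem'
    have hk' : k ≤ m := le_of_lt hk
    rw [key k hk'] at hmem'
    have hkR : (k : ℝ) + 2 ≤ (m : ℝ) + 1 := by
      have : (k : ℝ) + 1 ≤ m := by exact_mod_cast hk
      linarith
    have hk2 : ((k : ℝ) + 2) * x < 1 := by
      have h1 : ((k : ℝ) + 2) * x < (1 / x) * x :=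
        mul_lt_mul_of_pos_right (by linarith) hx0
      rw [one_div, inv_mul_cancel₀ hxne] at h1
      exact h1
    have hden : 0 < 1 - (k : ℝ) * x := by nlinarith
    have := hmem'.1
    rw [div_lt_div_iff₀ (by norm_num) hden] at this
    nlinarith
  have hE : entryTime x = m := by
    refine le_antisymm (Nat.sInf_le hmem) ?_
    by_contra h
    push_neg at h
    have hmemE : fareyMap^[entryTime x] x ∈ Set.Ioc (1 / 2 : ℝ) 1 :=
      Nat.sInf_mem (⟨m, hmem⟩ : Set.Nonempty {k : ℕ | fareyMap^[k] x ∈ Set.Ioc (1 / 2 : ℝ) 1})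
    exact hnot _ h hmemE
  have hstep : fareyMap^[entryTime x + 1] x = 1 / x - (f : ℝ) := by
    rw [hE, Function.iterate_succ_apply', key m le_rfl, fareyMap,
      if_neg (not_le.mpr (by rw [key m le_rfl] at hmem; exact hmem.1))]
    rw [one_div_div]
    field_simp
    rw [hm]
    ring
  refine ⟨hstep, ?_⟩
  rw [hstep, gaussMap, if_neg hxne, Int.fract]
end

section
/- For the Farey map with invariant measure dμ = (1/x)dλ and A_1 = (1/2,1], the wandering rate satisfies W_n := μ(⋃_{k=0}^n T^{-k}A_1) = log(n+2), and hence W_n ∼ log n as n → ∞. -/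
open MeasureTheory Filter

lemma measurable_fareyMap : Measurable fareyMap := by
  unfold fareyMap
  exact Measurable.ite (measurableSet_le measurable_id measurable_const)
    (measurable_id.div (measurable_const.sub measurable_id))
    ((measurable_const.div measurable_id).sub measurable_const)

lemma farey_small (c x : ℝ) (hc : 2 ≤ c) (h0 : 0 ≤ x) (h1 : x ≤ c⁻¹) :
    0 ≤ fareyMap x ∧ fareyMap x ≤ (c - 1)⁻¹ := by
  have hc0 : (0:ℝ) < c := by linarith
  have hc1 : (0:ℝ) < c - 1 := by linarith
  have hx2 : x ≤ 1/2 := h1.trans (by rw [inv_le_comm₀ (by linarith) (by norm_num)]; norm_num; linarith)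
  have hx1 : (0:ℝ) < 1 - x := by linarith
  have h1' : x * c ≤ 1 := by
    have := mul_le_mul_of_nonneg_right h1 hc0.le
    rwa [inv_mul_cancel₀ hc0.ne'] at this
  rw [fareyMap, if_pos hx2]
  constructor
  · exact div_nonneg h0 hx1.le
  · rw [div_le_iff₀ hx1, ← one_div, div_mul_eq_mul_div, le_div_iff₀ hc1]
    nlinarith

lemma farey_step (c x : ℝ) (hc : 2 ≤ c) (h0 : (c + 1)⁻¹ < x) (h1 : x ≤ c⁻¹) :
    c⁻¹ < fareyMap x ∧ fareyMap x ≤ (c - 1)⁻¹ := by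
  have hc0 : (0:ℝ) < c := by linarith
  have hc1 : (0:ℝ) < c + 1 := by linarith
  have hx0 : 0 < x := lt_trans (by positivity) h0
  have hx2 : x ≤ 1/2 := h1.trans (by rw [inv_le_comm₀ (by linarith) (by norm_num)]; norm_num; linarith)
  have hx1 : (0:ℝ) < 1 - x := by linarith
  have h0' : 1 < x * (c + 1) := by
    have := mul_lt_mul_of_pos_right h0 hc1
    rwa [inv_mul_cancel₀ hc1.ne'] at this
  constructor
  · rw [fareyMap, if_pos hx2, lt_div_iff₀ hx1, ← one_div, div_mul_eq_mul_div,
      div_lt_iff₀ hc0]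
    nlinarith
  · exact (farey_small c x hc hx0.le h1).2

lemma farey_iter (k : ℕ) : ∀ x : ℝ, ((k:ℝ) + 2)⁻¹ < x → x ≤ ((k:ℝ) + 1)⁻¹ →
    fareyMap^[k] x ∈ Set.Ioc (1/2 : ℝ) 1 := by
  induction k with
  | zero =>
    intro x h1 h2
    norm_num at h1 h2 ⊢
    exact ⟨by linarith, by linarith⟩
  | succ k ih =>
    intro x h1 h2
    rw [Function.iterate_succ_apply]
    push_cast at h1 h2
    have hstep := farey_step ((k:ℝ) + 2) x (by linarith [(Nat.cast_nonneg k : (0:ℝ) ≤ k)]) (by convert h1 using 2; ring)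
      (by convert h2 using 2; ring)
    have := ih (fareyMap x) (by convert hstep.1 using 2) (by convert hstep.2 using 2; ring)
    exact this

lemma farey_small_iter (k : ℕ) : ∀ (m : ℕ) (x : ℝ), 0 ≤ x → x ≤ ((k:ℝ) + (m:ℝ) + 2)⁻¹ →
    0 ≤ fareyMap^[k] x ∧ fareyMap^[k] x ≤ ((m:ℝ) + 2)⁻¹ := by
  induction k with
  | zero =>
    intro m x h0 h1
    simpa using ⟨h0, by simpa using h1⟩
  | succ k ih =>
    intro m x h0 h1
    rw [Function.iterate_succ_apply]
    have hsm := farey_small ((k:ℝ) + (m:ℝ) + 3) x (by linarith [(Nat.cast_nonneg k : (0:ℝ) ≤ k), (Nat.cast_nonneg m : (0:ℝ) ≤ m)]) h0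
      (by push_cast at h1; convert h1 using 2; ring)
    have : fareyMap x ≤ ((k:ℝ) + (m:ℝ) + 2)⁻¹ := by
      convert hsm.2 using 2; ring
    exact ih m (fareyMap x) hsm.1 this

lemma exists_k (n : ℕ) (x : ℝ) (h1 : ((n:ℝ) + 2)⁻¹ < x) (h2 : x ≤ 1) :
    ∃ k ≤ n, fareyMap^[k] x ∈ Set.Ioc (1/2 : ℝ) 1 := by
  induction n with
  | zero =>
    refine ⟨0, le_refl 0, ?_⟩
    norm_num at h1 ⊢
    exact ⟨h1, h2⟩
  | succ n ih =>
    by_cases h : ((n:ℝ) + 2)⁻¹ < x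
    · obtain ⟨k, hk, hmem⟩ := ih h
      exact ⟨k, hk.trans (Nat.le_succ n), hmem⟩
    · push_neg at h
      refine ⟨n + 1, le_refl _, farey_iter (n + 1) x ?_ ?_⟩
      · push_cast at h1 ⊢; linarith
      · push_cast; rw [show ((n:ℝ) + 1 + 1) = (n:ℝ) + 2 by ring]; exact h

lemma union_inter (n : ℕ) :
    (⋃ k ∈ Finset.range (n + 1), fareyMap^[k] ⁻¹' Set.Ioc (1/2 : ℝ) 1) ∩ Set.Icc 0 1
      = Set.Ioc (((n:ℝ) + 2)⁻¹) 1 := by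
  ext x
  simp only [Set.mem_inter_iff, Set.mem_iUnion, Set.mem_preimage, Set.mem_Ioc, Set.mem_Icc,
    Finset.mem_range, Nat.lt_succ_iff]
  constructor
  · rintro ⟨⟨k, hk, hmem⟩, hx0, hx1⟩
    refine ⟨?_, hx1⟩
    by_contra hcon
    push_neg at hcon
    have hkm : (k:ℝ) + ((n - k : ℕ) : ℝ) + 2 = (n:ℝ) + 2 := by
      have := Nat.cast_sub hk (R := ℝ)
      push_cast [this]; ring
    have := (farey_small_iter k (n - k) x hx0 (by rw [hkm]; exact hcon)).2
    have hhalf : (((n - k : ℕ) : ℝ) + 2)⁻¹ ≤ 1/2 := by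
      rw [inv_le_comm₀ (by positivity) (by norm_num)]
      norm_num
    linarith [hmem.1]
  · rintro ⟨hx, hx1⟩
    have hx0 : 0 ≤ x := le_of_lt (lt_of_le_of_lt (by positivity) hx)
    obtain ⟨k, hk, hmem⟩ := exists_k n x hx hx1
    exact ⟨⟨k, hk, hmem⟩, hx0, hx1⟩

lemma lint_one_div (a : ℝ) (ha : 0 < a) (ha1 : a ≤ 1) :
    ∫⁻ x in Set.Ioc a 1, ENNReal.ofReal (1/x) = ENNReal.ofReal (Real.log (1/a)) := by
  have hcont : ContinuousOn (fun x : ℝ => 1/x) (Set.Icc a 1) :=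
    continuousOn_const.div continuousOn_id (fun x hx => (lt_of_lt_of_le ha hx.1).ne')
  have hint : IntegrableOn (fun x : ℝ => 1/x) (Set.Ioc a 1) :=
    (hcont.integrableOn_Icc).mono_set Set.Ioc_subset_Icc_self
  rw [← ofReal_integral_eq_lintegral_ofReal hint ?_]
  · congr 1
    rw [← intervalIntegral.integral_of_le ha1, integral_one_div]
    intro hmem
    rw [Set.mem_uIcc] at hmem
    rcases hmem with ⟨h1, _⟩ | ⟨_, h2⟩ <;> linarith
  · filter_upwards [ae_restrict_mem measurableSet_Ioc] with x hx
    exact div_nonneg zero_le_one (ha.trans hx.1).le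

lemma farey_measure_eq (n : ℕ) :
    fareyMeasure (⋃ k ∈ Finset.range (n + 1), fareyMap^[k] ⁻¹' Set.Ioc (1 / 2 : ℝ) 1)
      = ENNReal.ofReal (Real.log ((n : ℝ) + 2)) := by
  have hS : MeasurableSet (⋃ k ∈ Finset.range (n + 1), fareyMap^[k] ⁻¹' Set.Ioc (1/2 : ℝ) 1) :=
    MeasurableSet.biUnion (Finset.range (n+1)).countable_toSet
      (fun k _ => measurableSet_Ioc.preimage (measurable_fareyMap.iterate k))
  have hpos : (0:ℝ) < (n:ℝ) + 2 := by positivity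
  rw [fareyMeasure, withDensity_apply _ hS, Measure.restrict_restrict hS, union_inter n,
    lint_one_div _ (by positivity) (by rw [inv_le_one_iff₀]; right; linarith)]
  congr 1
  rw [one_div, inv_inv]

/-- The wandering rate of `A₁ = (1/2,1]` for the Farey map:
`Wₙ = μ(⋃_{k=0}^n T^{-k}A₁) = log (n+2)`, hence `Wₙ ∼ log n`. -/
theorem farey_wanderingRate :
    (∀ n : ℕ,
      fareyMeasure (⋃ k ∈ Finset.range (n + 1), fareyMap^[k] ⁻¹' Set.Ioc (1 / 2 : ℝ) 1)
        = ENNReal.ofReal (Real.log ((n : ℝ) + 2))) ∧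
    Tendsto (fun n : ℕ =>
      (fareyMeasure (⋃ k ∈ Finset.range (n + 1),
        fareyMap^[k] ⁻¹' Set.Ioc (1 / 2 : ℝ) 1)).toReal / Real.log n) atTop (nhds 1) := by
  refine ⟨farey_measure_eq, ?_⟩
  have hlim : Tendsto (fun n : ℕ => Real.log ((n:ℝ) + 2) / Real.log n) atTop (nhds 1) := by
    have hlogn : Tendsto (fun n : ℕ => Real.log n) atTop atTop :=
      Real.tendsto_log_atTop.comp tendsto_natCast_atTop_atTop
    have h2n : Tendsto (fun n : ℕ => 1 + 2 / (n:ℝ)) atTop (nhds 1) := by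
      have h : Tendsto (fun n : ℕ => 2 / (n:ℝ)) atTop (nhds 0) :=
        Tendsto.div_atTop tendsto_const_nhds tendsto_natCast_atTop_atTop
      simpa using tendsto_const_nhds.add h
    have hlog2n : Tendsto (fun n : ℕ => Real.log (1 + 2 / (n:ℝ))) atTop (nhds 0) := by
      have := (Real.continuousAt_log (one_ne_zero)).tendsto.comp h2n
      simpa [Real.log_one, Function.comp_def] using this
    have hmain : Tendsto (fun n : ℕ => 1 + Real.log (1 + 2 / (n:ℝ)) / Real.log n) atTop (nhds 1) := by
      have h : Tendsto (fun n : ℕ => Real.log (1 + 2 / (n:ℝ)) / Real.log n) atTop (nhds 0) :=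
        Tendsto.div_atTop hlog2n hlogn
      simpa using tendsto_const_nhds.add h
    refine hmain.congr' ?_
    filter_upwards [eventually_ge_atTop 2] with n hn
    have hn0 : (0:ℝ) < n := by exact_mod_cast Nat.lt_of_lt_of_le (by norm_num) hn
    have hln : Real.log n ≠ 0 := by
      have : (1:ℝ) < n := by exact_mod_cast Nat.lt_of_lt_of_le (by norm_num) hn
      exact (Real.log_pos this).ne'
    have hsplit : Real.log ((n:ℝ) + 2) = Real.log n + Real.log (1 + 2 / (n:ℝ)) := by
      rw [← Real.log_mul hn0.ne' (by positivity)]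
      congr 1
      field_simp
    rw [hsplit]
    field_simp
  refine hlim.congr' ?_
  filter_upwards with n
  rw [farey_measure_eq n, ENNReal.toReal_ofReal]
  exact Real.log_nonneg (by push_cast; linarith [(Nat.cast_nonneg n : (0:ℝ) ≤ n)])
end

section
/- If f : (0,1) → ℝ is a twice differentiable probability density with respect to μ with f' > 0 and f'' ≤ 0, then T̂f, where T̂ is the transfer operator of the Farey map, is also twice differentiable with (T̂f)' > 0 and (T̂f)'' ≤ 0 on (0,1). -/
open MeasureTheory

/-- The transfer operator of the Farey map with respect to `dμ = (1/x)dλ`. -/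
noncomputable def fareyTransfer (f : ℝ → ℝ) (x : ℝ) : ℝ :=
  (f (x / (x + 1)) + x * f (1 / (x + 1))) / (x + 1)

/-- Auxiliary: `T̂f(x) = h(1/(x+1))` where `h t = t f(1-t) + (1-t) f(t)`. -/
noncomputable def fareyH (f : ℝ → ℝ) (t : ℝ) : ℝ := t * f (1 - t) + (1 - t) * f t

/-- First derivative of `fareyH`. -/
noncomputable def fareyH1 (f : ℝ → ℝ) (t : ℝ) : ℝ :=
  f (1 - t) - t * deriv f (1 - t) - f t + (1 - t) * deriv f t

/-- Second derivative of `fareyH`. -/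
noncomputable def fareyH2 (f : ℝ → ℝ) (t : ℝ) : ℝ :=
  -(2 * deriv f (1 - t)) + t * deriv (deriv f) (1 - t)
    - 2 * deriv f t + (1 - t) * deriv (deriv f) t

/-- First derivative of `T̂f`. -/
noncomputable def fareyG1 (f : ℝ → ℝ) (x : ℝ) : ℝ :=
  -(fareyH1 f (1 / (x + 1)) * (1 / (x + 1)) ^ 2)

/-- Second derivative of `T̂f`. -/
noncomputable def fareyG2 (f : ℝ → ℝ) (x : ℝ) : ℝ :=
  fareyH2 f (1 / (x + 1)) * (1 / (x + 1)) ^ 4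
    + 2 * fareyH1 f (1 / (x + 1)) * (1 / (x + 1)) ^ 3

lemma fareyH_hasDeriv (f : ℝ → ℝ) (t : ℝ)
    (h1 : HasDerivAt f (deriv f t) t) (h2 : HasDerivAt f (deriv f (1 - t)) (1 - t)) :
    HasDerivAt (fareyH f) (fareyH1 f t) t := by
  have hc : HasDerivAt (fun u : ℝ => 1 - u) (-1) t := by
    simpa using (hasDerivAt_id t).const_sub (1 : ℝ)
  have hA : HasDerivAt (fun u => f (1 - u)) (deriv f (1 - t) * (-1)) t := h2.comp t hc
  have h := ((hasDerivAt_id t).mul hA).add (hc.mul h1)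
  refine h.congr_deriv ?_
  simp only [fareyH1, id_eq]
  ring

lemma fareyH1_hasDeriv (f : ℝ → ℝ) (t : ℝ)
    (h1 : HasDerivAt f (deriv f t) t) (h2 : HasDerivAt f (deriv f (1 - t)) (1 - t))
    (h3 : HasDerivAt (deriv f) (deriv (deriv f) t) t)
    (h4 : HasDerivAt (deriv f) (deriv (deriv f) (1 - t)) (1 - t)) :
    HasDerivAt (fareyH1 f) (fareyH2 f t) t := by
  have hc : HasDerivAt (fun u : ℝ => 1 - u) (-1) t := by
    simpa using (hasDerivAt_id t).const_sub (1 : ℝ)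
  have hA : HasDerivAt (fun u => f (1 - u)) (deriv f (1 - t) * (-1)) t := h2.comp t hc
  have hB : HasDerivAt (fun u => deriv f (1 - u)) (deriv (deriv f) (1 - t) * (-1)) t :=
    h4.comp t hc
  have h := ((hA.sub ((hasDerivAt_id t).mul hB)).sub h1).add (hc.mul h3)
  refine h.congr_deriv ?_
  simp only [fareyH2, id_eq]
  ring

/-- If `f` is a twice differentiable probability density w.r.t. `μ` with `f' > 0` and
`f'' ≤ 0` on `(0,1)`, then so is `T̂f`. -/
theorem fareyTransfer_preserves_class_D (f : ℝ → ℝ)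
    (hf_nonneg : ∀ x ∈ Set.Ioo (0 : ℝ) 1, 0 ≤ f x)
    (hf_density : ∫ x, f x ∂fareyMeasure = 1)
    (hf_smooth : ContDiffOn ℝ 2 f (Set.Ioo (0 : ℝ) 1))
    (hf_deriv : ∀ x ∈ Set.Ioo (0 : ℝ) 1, 0 < deriv f x)
    (hf_deriv2 : ∀ x ∈ Set.Ioo (0 : ℝ) 1, deriv (deriv f) x ≤ 0) :
    ContDiffOn ℝ 2 (fareyTransfer f) (Set.Ioo (0 : ℝ) 1) ∧
      (∀ x ∈ Set.Ioo (0 : ℝ) 1, 0 < deriv (fareyTransfer f) x) ∧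
      (∀ x ∈ Set.Ioo (0 : ℝ) 1, deriv (deriv (fareyTransfer f)) x ≤ 0) := by
  have hIopen : IsOpen (Set.Ioo (0 : ℝ) 1) := isOpen_Ioo
  have hf1 : ContDiffOn ℝ 1 (deriv f) (Set.Ioo (0 : ℝ) 1) :=
    hf_smooth.deriv_of_isOpen hIopen (by norm_num)
  have hf_diff : ∀ x ∈ Set.Ioo (0 : ℝ) 1, HasDerivAt f (deriv f x) x := fun x hx =>
    ((hf_smooth.contDiffAt (hIopen.mem_nhds hx)).differentiableAt (by norm_num)).hasDerivAt
  have hdf_diff : ∀ x ∈ Set.Ioo (0 : ℝ) 1, HasDerivAt (deriv f) (deriv (deriv f) x) x :=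
    fun x hx =>
    ((hf1.contDiffAt (hIopen.mem_nhds hx)).differentiableAt (by norm_num)).hasDerivAt
  have hmono : StrictMonoOn f (Set.Ioo (0 : ℝ) 1) :=
    strictMonoOn_of_deriv_pos (convex_Ioo 0 1) hf_smooth.continuousOn
      (by rw [interior_Ioo]; exact hf_deriv)
  have hanti : AntitoneOn (deriv f) (Set.Ioo (0 : ℝ) 1) :=
    antitoneOn_of_deriv_nonpos (convex_Ioo 0 1) hf1.continuousOn
      (by rw [interior_Ioo]
          exact fun x hx => (hdf_diff x hx).differentiableAt.differentiableWithinAt)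
      (by rw [interior_Ioo]; exact hf_deriv2)
  -- membership facts for s = 1/(x+1)
  have hsmem : ∀ x ∈ Set.Ioo (0 : ℝ) 1,
      1 / (x + 1) ∈ Set.Ioo (0 : ℝ) 1 ∧ 1 - 1 / (x + 1) ∈ Set.Ioo (0 : ℝ) 1 ∧
        1 - 1 / (x + 1) < 1 / (x + 1) := by
    intro x hx
    have h0 : (0 : ℝ) < x + 1 := by linarith [hx.1]
    have hlt1 : 1 / (x + 1) < 1 := by rw [div_lt_one h0]; linarith [hx.1]
    have hgt : (1 : ℝ) / 2 < 1 / (x + 1) := by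
      rw [div_lt_div_iff₀ (by norm_num) h0]; linarith [hx.2]
    refine ⟨⟨by linarith, hlt1⟩, ⟨by linarith, by linarith⟩, by linarith⟩
  -- the Farey transfer agrees with fareyH ∘ s on (0,1)
  have heq : Set.EqOn (fareyTransfer f) (fun x => fareyH f (1 / (x + 1)))
      (Set.Ioo (0 : ℝ) 1) := by
    intro x hx
    have h0 : (0 : ℝ) < x + 1 := by linarith [hx.1]
    have e1 : 1 - 1 / (x + 1) = x / (x + 1) := by field_simp; ring
    simp only [fareyTransfer, fareyH, e1]
    field_simp
  -- derivative of s
  have hs : ∀ x ∈ Set.Ioo (0 : ℝ) 1,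
      HasDerivAt (fun y : ℝ => 1 / (y + 1)) (-((1 / (x + 1)) ^ 2)) x := by
    intro x hx
    have hne : x + 1 ≠ 0 := by nlinarith [hx.1]
    have h := ((hasDerivAt_id x).add_const 1).inv hne
    simp only [one_div]
    refine h.congr_deriv ?_
    simp only [id_eq]
    field_simp
  -- the composite has derivative fareyG1
  have hg1 : ∀ x ∈ Set.Ioo (0 : ℝ) 1,
      HasDerivAt (fun y => fareyH f (1 / (y + 1))) (fareyG1 f x) x := by
    intro x hx
    obtain ⟨hm1, hm2, _⟩ := hsmem x hx
    have h := (fareyH_hasDeriv f (1 / (x + 1)) (hf_diff _ hm1) (hf_diff _ hm2)).comp x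
      (hs x hx)
    refine h.congr_deriv ?_
    simp only [fareyG1]
    ring
  have hderiv1 : ∀ x ∈ Set.Ioo (0 : ℝ) 1, deriv (fareyTransfer f) x = fareyG1 f x := by
    intro x hx
    have hev : fareyTransfer f =ᶠ[nhds x] fun y => fareyH f (1 / (y + 1)) :=
      Filter.eventuallyEq_of_mem (hIopen.mem_nhds hx) heq
    rw [hev.deriv_eq, (hg1 x hx).deriv]
  -- fareyG1 has derivative fareyG2
  have hg2 : ∀ x ∈ Set.Ioo (0 : ℝ) 1, HasDerivAt (fareyG1 f) (fareyG2 f x) x := by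
    intro x hx
    obtain ⟨hm1, hm2, _⟩ := hsmem x hx
    have hc : HasDerivAt (fun y => fareyH1 f (1 / (y + 1)))
        (fareyH2 f (1 / (x + 1)) * -((1 / (x + 1)) ^ 2)) x :=
      (fareyH1_hasDeriv f (1 / (x + 1)) (hf_diff _ hm1) (hf_diff _ hm2)
        (hdf_diff _ hm1) (hdf_diff _ hm2)).comp (h₂ := fareyH1 f) x (hs x hx)
    have hsq : HasDerivAt (fun y : ℝ => (1 / (y + 1)) ^ 2)
        ((2 : ℕ) * (1 / (x + 1)) ^ 1 * -((1 / (x + 1)) ^ 2)) x := (hs x hx).pow 2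
    have h := (hc.mul hsq).neg
    have hfun : (-((fun y => fareyH1 f (1 / (y + 1))) * fun y => (1 / (y + 1)) ^ 2)) = fareyG1 f := by
      funext y; simp only [fareyG1, Pi.neg_apply, Pi.mul_apply]
    rw [hfun] at h
    refine h.congr_deriv ?_
    simp only [fareyG2]
    push_cast
    ring
  have hderiv2 : ∀ x ∈ Set.Ioo (0 : ℝ) 1,
      deriv (deriv (fareyTransfer f)) x = fareyG2 f x := by
    intro x hx
    have hev : deriv (fareyTransfer f) =ᶠ[nhds x] fareyG1 f :=
      Filter.eventuallyEq_of_mem (hIopen.mem_nhds hx) hderiv1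
    rw [hev.deriv_eq, (hg2 x hx).deriv]
  -- sign facts
  have hH1neg : ∀ x ∈ Set.Ioo (0 : ℝ) 1, fareyH1 f (1 / (x + 1)) < 0 := by
    intro x hx
    obtain ⟨hm1, hm2, hlt⟩ := hsmem x hx
    set t := 1 / (x + 1) with ht
    have hmlt : f (1 - t) < f t := hmono hm2 hm1 hlt
    have ha : deriv f t ≤ deriv f (1 - t) := hanti hm2 hm1 hlt.le
    have hp : 0 < deriv f (1 - t) := hf_deriv _ hm2
    have e1 : (1 - t) * deriv f t ≤ (1 - t) * deriv f (1 - t) :=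
      mul_le_mul_of_nonneg_left ha hm2.1.le
    have e2 : (1 - t) * deriv f (1 - t) ≤ t * deriv f (1 - t) :=
      mul_le_mul_of_nonneg_right hlt.le hp.le
    simp only [fareyH1]
    linarith
  have hH2nonpos : ∀ x ∈ Set.Ioo (0 : ℝ) 1, fareyH2 f (1 / (x + 1)) ≤ 0 := by
    intro x hx
    obtain ⟨hm1, hm2, _⟩ := hsmem x hx
    set t := 1 / (x + 1) with ht
    have hp1 : 0 < deriv f (1 - t) := hf_deriv _ hm2
    have hp2 : 0 < deriv f t := hf_deriv _ hm1
    have e1 : t * deriv (deriv f) (1 - t) ≤ 0 :=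
      mul_nonpos_of_nonneg_of_nonpos hm1.1.le (hf_deriv2 _ hm2)
    have e2 : (1 - t) * deriv (deriv f) t ≤ 0 :=
      mul_nonpos_of_nonneg_of_nonpos hm2.1.le (hf_deriv2 _ hm1)
    simp only [fareyH2]
    linarith
  refine ⟨?_, ?_, ?_⟩
  · -- smoothness
    have hScd : ContDiffOn ℝ 2 (fun x : ℝ => 1 / (x + 1)) (Set.Ioo (0 : ℝ) 1) := by
      apply ContDiffOn.div contDiffOn_const (contDiffOn_id.add contDiffOn_const)
      intro x hx
      have : (0 : ℝ) < x + 1 := by linarith [hx.1]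
      exact ne_of_gt this
    have hsub : ContDiffOn ℝ 2 (fun t : ℝ => f (1 - t)) (Set.Ioo (0 : ℝ) 1) := by
      apply hf_smooth.comp (contDiffOn_const.sub contDiffOn_id)
      intro t ht
      simp only [id_eq, Set.mem_Ioo]
      exact ⟨by linarith [ht.2], by linarith [ht.1]⟩
    have hH : ContDiffOn ℝ 2 (fareyH f) (Set.Ioo (0 : ℝ) 1) := by
      apply ContDiffOn.add
      · exact contDiffOn_id.mul hsub
      · exact (contDiffOn_const.sub contDiffOn_id).mul hf_smooth
    have hcomp : ContDiffOn ℝ 2 (fun x => fareyH f (1 / (x + 1))) (Set.Ioo (0 : ℝ) 1) :=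
      hH.comp hScd (fun x hx => (hsmem x hx).1)
    exact hcomp.congr heq
  · intro x hx
    rw [hderiv1 x hx]
    have h1 := hH1neg x hx
    have h2 : (0 : ℝ) < (1 / (x + 1)) ^ 2 := pow_pos (hsmem x hx).1.1 2
    simp only [fareyG1]
    nlinarith
  · intro x hx
    rw [hderiv2 x hx]
    have h1 := hH1neg x hx
    have h2 := hH2nonpos x hx
    have h3 : (0 : ℝ) < (1 / (x + 1)) ^ 3 := pow_pos (hsmem x hx).1.1 3
    have h4 : (0 : ℝ) < (1 / (x + 1)) ^ 4 := pow_pos (hsmem x hx).1.1 4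
    simp only [fareyG2]
    nlinarith
end

section
/- Define for irrational x ∈ (0,1) and n ∈ ℕ: X_n(x) = max{S_k(x) : S_k(x) ≤ n, k ∈ ℕ_0}, where S_k = a_1 + ⋯ + a_k are continued fraction digit sums (S_0 = 0). Let Z_n be the last visit time to A_1 = (1/2,1] under the Farey map T before time n: Z_n(x) = max{k ≤ n : T^k(x) ∈ A_1} for x ∈ K_n = ⋃_{k=0}^n T^{-k}A_1, and 0 otherwise. Then for all irrational x: X_n(x) = 1 + Z_{n-1}(x) if x ∈ K_{n-1}, and X_n(x) = 0 otherwise. -/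
/-- The digit sum `S_k = a_1 + ⋯ + a_k` of continued fraction digits, `a_{i+1}(x) =
⌊1 / Gⁱ(x)⌋`. -/
noncomputable def cfDigitSum (x : ℝ) (k : ℕ) : ℕ :=
  ∑ i ∈ Finset.range k, (⌊1 / (gaussMap^[i] x)⌋).toNat

/-- `X_n(x) = max{S_k(x) : S_k(x) ≤ n, k ∈ ℕ₀}`. -/
noncomputable def Xproc (n : ℕ) (x : ℝ) : ℕ :=
  sSup {m : ℕ | m ≤ n ∧ ∃ k : ℕ, cfDigitSum x k = m}

/-- `K_n = ⋃_{k=0}^n T^{-k} A₁` with `A₁ = (1/2,1]`. -/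
noncomputable def Kset (n : ℕ) : Set ℝ :=
  ⋃ k ∈ Finset.range (n + 1), fareyMap^[k] ⁻¹' Set.Ioc (1 / 2 : ℝ) 1

open Classical in
/-- `Z_n(x)`: the last visit time to `A₁ = (1/2,1]` before time `n` under the Farey
map (and `0` off `K_n`). -/
noncomputable def Zproc (n : ℕ) (x : ℝ) : ℕ :=
  if x ∈ Kset n then sSup {k : ℕ | k ≤ n ∧ fareyMap^[k] x ∈ Set.Ioc (1 / 2 : ℝ) 1}
  else 0

/- ### Auxiliary lemmas -/

lemma my_gauss_step {x : ℝ} (hx : Irrational x) (h : x ∈ Set.Ioo (0 : ℝ) 1) :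
    Irrational (gaussMap x) ∧ gaussMap x ∈ Set.Ioo (0 : ℝ) 1 := by
  have hx0 : x ≠ 0 := ne_of_gt h.1
  have hinv : Irrational (1 / x) := by rw [one_div]; exact hx.inv
  have hg : gaussMap x = Int.fract (1 / x) := by simp [gaussMap, hx0]
  have hirr : Irrational (Int.fract (1 / x)) := by
    unfold Int.fract; exact hinv.sub_intCast _
  refine ⟨hg ▸ hirr, ?_, ?_⟩
  · rw [hg]
    rcases lt_or_eq_of_le (Int.fract_nonneg (1 / x)) with h' | h'
    · exact h'
    · exact ((h' ▸ hirr) ⟨0, by norm_num⟩).elim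
  · rw [hg]; exact Int.fract_lt_one _

lemma my_gauss_iter {x : ℝ} (hx : Irrational x) (h : x ∈ Set.Ioo (0 : ℝ) 1) (k : ℕ) :
    Irrational (gaussMap^[k] x) ∧ gaussMap^[k] x ∈ Set.Ioo (0 : ℝ) 1 := by
  induction k with
  | zero => exact ⟨hx, h⟩
  | succ k ih => rw [Function.iterate_succ_apply']; exact my_gauss_step ih.1 ih.2

/-- Digit bounds: with `a = ⌊1/x⌋.toNat`, we have `1 ≤ a` and `(a:ℝ) < 1/x < a+1`. -/
lemma my_digit_bounds {x : ℝ} (hx : Irrational x) (h : x ∈ Set.Ioo (0 : ℝ) 1) :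
    1 ≤ (⌊1 / x⌋).toNat ∧ ((⌊1 / x⌋).toNat : ℝ) < 1 / x ∧
      1 / x < ((⌊1 / x⌋).toNat : ℝ) + 1 := by
  have hx0 : (0 : ℝ) < x := h.1
  have h1x : (1 : ℝ) < 1 / x := (one_lt_div hx0).mpr h.2
  have hfl : (1 : ℤ) ≤ ⌊1 / x⌋ := Int.le_floor.mpr (by exact_mod_cast le_of_lt h1x)
  have hcast : ((⌊1 / x⌋).toNat : ℝ) = (⌊1 / x⌋ : ℝ) := by
    exact_mod_cast congrArg (Int.cast : ℤ → ℝ) (Int.toNat_of_nonneg (by omega))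
  have hinv : Irrational (1 / x) := by rw [one_div]; exact hx.inv
  refine ⟨by omega, ?_, ?_⟩
  · rw [hcast]
    exact lt_of_le_of_ne (Int.floor_le _) (Ne.symm (hinv.ne_int _))
  · rw [hcast]
    exact_mod_cast Int.lt_floor_add_one (1 / x)

lemma my_block_formula {x : ℝ} (hx : Irrational x) (h : x ∈ Set.Ioo (0 : ℝ) 1) :
    ∀ j : ℕ, (j : ℝ) + 1 < 1 / x → fareyMap^[j] x = x / (1 - j * x) := by
  intro j
  induction j with
  | zero => intro _; simp
  | succ j ih =>
    intro hj
    have hx0 : (0 : ℝ) < x := h.1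
    have hj' : (j : ℝ) + 1 < 1 / x := by push_cast at hj ⊢; linarith
    have hjx : (j : ℝ) * x < 1 := by
      have h' : (j : ℝ) < 1 / x := by linarith
      exact (lt_div_iff₀ hx0).mp h'
    have hj1x : ((j : ℝ) + 1) * x < 1 := (lt_div_iff₀ hx0).mp hj'
    have hj2x : ((j : ℝ) + 2) * x < 1 := by
      have : ((j : ℝ) + 2) < 1 / x := by push_cast at hj; linarith
      exact (lt_div_iff₀ hx0).mp this
    have hden : (0 : ℝ) < 1 - j * x := by linarith
    rw [Function.iterate_succ_apply', ih hj']
    have hy : x / (1 - (j : ℝ) * x) ≤ 1 / 2 := by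
      rw [div_le_div_iff₀ hden two_pos]
      nlinarith
    rw [fareyMap, if_pos hy]
    have hden1 : (0 : ℝ) < 1 - ((j : ℝ) + 1) * x := by linarith
    have hne : (1 : ℝ) - j * x ≠ 0 := ne_of_gt hden
    have hne1 : (1 : ℝ) - ((j : ℝ) + 1) * x ≠ 0 := ne_of_gt hden1
    have hsub : (1 : ℝ) - x / (1 - j * x) = (1 - ((j : ℝ) + 1) * x) / (1 - j * x) := by
      rw [eq_div_iff hne, sub_mul, div_mul_cancel₀ _ hne]; ring
    rw [hsub, div_div_div_cancel_right₀ hne]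
    push_cast; ring_nf

lemma my_block_visit {x : ℝ} (hx : Irrational x) (h : x ∈ Set.Ioo (0 : ℝ) 1) {j : ℕ}
    (hj : j < (⌊1 / x⌋).toNat) :
    (fareyMap^[j] x ∈ Set.Ioc (1 / 2 : ℝ) 1 ↔ j + 1 = (⌊1 / x⌋).toNat) := by
  obtain ⟨ha1, hal, har⟩ := my_digit_bounds hx h
  set a := (⌊1 / x⌋).toNat with hadef
  have hx0 : (0 : ℝ) < x := h.1
  have hja : (j : ℝ) + 1 ≤ (a : ℝ) := by exact_mod_cast hj
  have hform : fareyMap^[j] x = x / (1 - j * x) :=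
    my_block_formula hx h j (by linarith)
  have hjx : (j : ℝ) * x < 1 := by
    have h' : (j : ℝ) < 1 / x := by linarith
    exact (lt_div_iff₀ hx0).mp h'
  have hden : (0 : ℝ) < 1 - j * x := by linarith
  rw [hform]
  constructor
  · rintro ⟨h1, _⟩
    -- 1/2 < x/(1-jx)  ⇒  1 < (j+2)x  ⇒  j+2 > 1/x > a  ⇒  j+1 ≥ a
    rw [div_lt_div_iff₀ two_pos hden] at h1
    by_contra hne
    have hj2 : j + 2 ≤ a := by omega
    have hj2' : (j : ℝ) + 2 ≤ (a : ℝ) := by exact_mod_cast hj2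
    have : ((j : ℝ) + 2) * x < 1 := by
      have : (j : ℝ) + 2 < 1 / x := by linarith
      exact (lt_div_iff₀ hx0).mp this
    nlinarith
  · intro heq
    have hja' : (j : ℝ) + 1 = (a : ℝ) := by exact_mod_cast heq
    constructor
    · rw [div_lt_div_iff₀ two_pos hden]
      have : 1 < ((j : ℝ) + 2) * x := by
        have h2 : 1 / x < (j : ℝ) + 2 := by linarith
        have := (div_lt_iff₀ hx0).mp h2
        linarith
      nlinarith
    · rw [div_le_one hden]
      have : ((j : ℝ) + 1) * x < 1 := by
        have h2 : (j : ℝ) + 1 < 1 / x := by linarith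
        exact (lt_div_iff₀ hx0).mp h2
      linarith

lemma my_block_gauss {x : ℝ} (hx : Irrational x) (h : x ∈ Set.Ioo (0 : ℝ) 1) :
    fareyMap^[(⌊1 / x⌋).toNat] x = gaussMap x := by
  obtain ⟨ha1, hal, har⟩ := my_digit_bounds hx h
  set a := (⌊1 / x⌋).toNat with hadef
  have hx0 : (0 : ℝ) < x := h.1
  obtain ⟨b, hb⟩ : ∃ b, a = b + 1 := ⟨a - 1, by omega⟩
  have hbr : (b : ℝ) + 1 = (a : ℝ) := by exact_mod_cast hb.symm
  have hform : fareyMap^[b] x = x / (1 - b * x) :=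
    my_block_formula hx h b (by linarith)
  have hbx : (b : ℝ) * x < 1 := by
    have h' : (b : ℝ) < 1 / x := by linarith
    exact (lt_div_iff₀ hx0).mp h'
  have hden : (0 : ℝ) < 1 - b * x := by linarith
  have hgt : ¬ (x / (1 - b * x) ≤ 1 / 2) := by
    rw [not_le, div_lt_div_iff₀ two_pos hden]
    have : 1 < ((b : ℝ) + 2) * x := by
      have h2 : 1 / x < (b : ℝ) + 2 := by linarith
      have := (div_lt_iff₀ hx0).mp h2
      linarith
    nlinarith
  rw [hb, Function.iterate_succ_apply', hform, fareyMap, if_neg hgt]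
  have hfl0 : (0 : ℤ) ≤ ⌊1 / x⌋ := le_trans zero_le_one (Int.le_floor.mpr
    (by exact_mod_cast le_of_lt ((one_lt_div hx0).mpr h.2)))
  have hgm : gaussMap x = 1 / x - (a : ℝ) := by
    rw [gaussMap, if_neg (ne_of_gt hx0), Int.fract]
    congr 1
    rw [hadef]
    exact_mod_cast (congrArg (Int.cast : ℤ → ℝ) (Int.toNat_of_nonneg hfl0)).symm
  rw [hgm, ← hbr]
  have hne : (1 : ℝ) - b * x ≠ 0 := ne_of_gt hden
  have hxne : x ≠ 0 := ne_of_gt hx0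
  field_simp
  ring

lemma my_S_zero (x : ℝ) : cfDigitSum x 0 = 0 := by simp [cfDigitSum]

lemma my_S_succ (x : ℝ) (k : ℕ) :
    cfDigitSum x (k + 1) = cfDigitSum x k + (⌊1 / (gaussMap^[k] x)⌋).toNat := by
  simp [cfDigitSum, Finset.sum_range_succ]

lemma my_S_mono {x : ℝ} (hx : Irrational x) (h : x ∈ Set.Ioo (0 : ℝ) 1) (k : ℕ) :
    cfDigitSum x k < cfDigitSum x (k + 1) := by
  rw [my_S_succ]
  have := (my_digit_bounds (my_gauss_iter hx h k).1 (my_gauss_iter hx h k).2).1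
  omega

lemma my_S_ge {x : ℝ} (hx : Irrational x) (h : x ∈ Set.Ioo (0 : ℝ) 1) (k : ℕ) :
    k ≤ cfDigitSum x k := by
  induction k with
  | zero => omega
  | succ k ih => have := my_S_mono hx h k; omega

lemma my_farey_S {x : ℝ} (hx : Irrational x) (h : x ∈ Set.Ioo (0 : ℝ) 1) (k : ℕ) :
    fareyMap^[cfDigitSum x k] x = gaussMap^[k] x := by
  induction k with
  | zero => simp [my_S_zero]
  | succ k ih =>
    have hS : cfDigitSum x (k + 1) = (⌊1 / (gaussMap^[k] x)⌋).toNat + cfDigitSum x k := by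
      rw [my_S_succ]; omega
    rw [hS, Function.iterate_add_apply, ih,
      my_block_gauss (my_gauss_iter hx h k).1 (my_gauss_iter hx h k).2]
    exact (Function.iterate_succ_apply' _ _ _).symm

lemma my_visit_iff {x : ℝ} (hx : Irrational x) (h : x ∈ Set.Ioo (0 : ℝ) 1) (j : ℕ) :
    fareyMap^[j] x ∈ Set.Ioc (1 / 2 : ℝ) 1 ↔ ∃ k, j + 1 = cfDigitSum x (k + 1) := by
  constructor
  · intro hmem
    -- locate the block containing j
    obtain ⟨k, hk1, hk2⟩ : ∃ k, cfDigitSum x k ≤ j ∧ j < cfDigitSum x (k + 1) := by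
      refine ⟨Nat.findGreatest (fun k => cfDigitSum x k ≤ j) j, ?_, ?_⟩
      · exact Nat.findGreatest_spec (P := fun k => cfDigitSum x k ≤ j) (m := 0) (Nat.zero_le j) (by show cfDigitSum x 0 ≤ j; rw [my_S_zero]; exact Nat.zero_le j)
      · by_contra hc
        push_neg at hc
        have hkj := le_trans (my_S_ge hx h _) hc
        exact Nat.findGreatest_is_greatest (Nat.lt_succ_self _) hkj hc
    set r := j - cfDigitSum x k with hrdef
    have hjr : j = r + cfDigitSum x k := by omega
    have hra : r < (⌊1 / (gaussMap^[k] x)⌋).toNat := by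
      have := my_S_succ x k; omega
    rw [hjr, Function.iterate_add_apply, my_farey_S hx h k] at hmem
    have := (my_block_visit (my_gauss_iter hx h k).1 (my_gauss_iter hx h k).2 hra).mp hmem
    exact ⟨k, by rw [my_S_succ]; omega⟩
  · rintro ⟨k, hk⟩
    have hSk := my_S_succ x k
    have ha1 := (my_digit_bounds (my_gauss_iter hx h k).1 (my_gauss_iter hx h k).2).1
    set a := (⌊1 / (gaussMap^[k] x)⌋).toNat with hadef
    have hjr : j = (a - 1) + cfDigitSum x k := by omega
    have hra : a - 1 < a := by omega
    rw [hjr, Function.iterate_add_apply, my_farey_S hx h k]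
    exact (my_block_visit (my_gauss_iter hx h k).1 (my_gauss_iter hx h k).2 hra).mpr (by omega)

lemma my_mem_Kset_iff (x : ℝ) (n : ℕ) :
    x ∈ Kset n ↔ ∃ j ≤ n, fareyMap^[j] x ∈ Set.Ioc (1 / 2 : ℝ) 1 := by
  simp only [Kset, Set.mem_iUnion, Finset.mem_range, Nat.lt_succ_iff, Set.mem_preimage]
  tauto

/-- Lemma 3 of the paper: for irrational `x ∈ (0,1)`, `X_n(x) = 1 + Z_{n-1}(x)` if
`x ∈ K_{n-1}`, and `X_n(x) = 0` otherwise. -/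
theorem Xproc_eq_one_add_Zproc (x : ℝ) (hx : Irrational x)
    (hx01 : x ∈ Set.Ioo (0 : ℝ) 1) (n : ℕ) (hn : 1 ≤ n) :
    (x ∈ Kset (n - 1) → Xproc n x = 1 + Zproc (n - 1) x) ∧
      (x ∉ Kset (n - 1) → Xproc n x = 0) := by
  set A : Set ℕ := {m : ℕ | m ≤ n ∧ ∃ k : ℕ, cfDigitSum x k = m} with hAdef
  have hXA : Xproc n x = sSup A := rfl
  have hbddA : BddAbove A := ⟨n, fun m hm => hm.1⟩
  have h0A : 0 ∈ A := ⟨Nat.zero_le n, 0, my_S_zero x⟩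
  constructor
  · intro hK
    set B : Set ℕ := {k : ℕ | k ≤ n - 1 ∧ fareyMap^[k] x ∈ Set.Ioc (1 / 2 : ℝ) 1} with hBdef
    have hZB : Zproc (n - 1) x = sSup B := if_pos hK
    have hbddB : BddAbove B := ⟨n - 1, fun m hm => hm.1⟩
    -- from hK get a visit j0 ≤ n-1
    obtain ⟨j0, hj0n, hj0v⟩ := (my_mem_Kset_iff x (n - 1)).mp hK
    obtain ⟨k0, hk0⟩ := (my_visit_iff hx hx01 j0).mp hj0v
    have hSk0A : cfDigitSum x (k0 + 1) ∈ A := ⟨by omega, k0 + 1, rfl⟩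
    set M := sSup A with hMdef
    have hMA : M ∈ A := Nat.sSup_mem ⟨0, h0A⟩ hbddA
    have hM1 : 1 ≤ M := le_trans (by omega) (le_csSup hbddA hSk0A)
    obtain ⟨hMn, k, hSk⟩ := hMA
    have hk0' : k ≠ 0 := by
      intro hc; rw [hc, my_S_zero] at hSk; omega
    obtain ⟨k', rfl⟩ : ∃ k', k = k' + 1 := ⟨k - 1, by omega⟩
    -- M - 1 ∈ B
    have hM1B : M - 1 ∈ B := by
      refine ⟨by omega, (my_visit_iff hx hx01 (M - 1)).mpr ⟨k', by omega⟩⟩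
    have hle1 : M - 1 ≤ sSup B := le_csSup hbddB hM1B
    have hle2 : sSup B ≤ M - 1 := by
      apply csSup_le ⟨M - 1, hM1B⟩
      rintro j ⟨hjn, hjv⟩
      obtain ⟨k2, hk2⟩ := (my_visit_iff hx hx01 j).mp hjv
      have : j + 1 ∈ A := ⟨by omega, k2 + 1, hk2.symm⟩
      have := le_csSup hbddA this
      omega
    rw [hXA, hZB]
    omega
  · intro hK
    rw [hXA]
    have hA0 : A = {0} := by
      apply Set.eq_singleton_iff_unique_mem.mpr
      refine ⟨h0A, fun m hm => ?_⟩
      by_contra hm0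
      obtain ⟨hmn, k, hSk⟩ := hm
      have hk0' : k ≠ 0 := by
        intro hc; rw [hc, my_S_zero] at hSk; omega
      obtain ⟨k', rfl⟩ : ∃ k', k = k' + 1 := ⟨k - 1, by omega⟩
      exact hK ((my_mem_Kset_iff x (n - 1)).mpr ⟨m - 1, by omega,
        (my_visit_iff hx hx01 (m - 1)).mpr ⟨k', by omega⟩⟩)
    rw [hA0]
    exact csSup_singleton 0
end
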